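/- Fix δ > 0 and 0 < h_L < h_U. The function CP(λ) = (Erf(√(πλδ) h_U) - Erf(√(πλδ) h_L)) / (2√(λδ)(1+δ)(h_U - h_L)) is strictly decreasing in λ on (0, ∞) and tends to 0 as λ → ∞. -/

import Mathlib

/-- The standard error function. -/
noncomputable def Erf (x : ℝ) : ℝ :=
  2 / Real.sqrt Real.pi * ∫ t in (0:ℝ)..x, Real.exp (-t ^ 2)

open intervalIntegral Real Filter in
lemma erf_diff_key (δ hL hU : ℝ) (hδ : 0 < δ) (lam : ℝ) (hlam : 0 < lam) :
    Erf (Real.sqrt (Real.pi * lam * δ) * hU) - Erf (Real.sqrt (Real.pi * lam * δ) * hL)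
      = 2 * Real.sqrt (lam * δ) * ∫ s in hL..hU, Real.exp (-(Real.pi * lam * δ * s ^ 2)) := by
  have hπ := Real.pi_pos
  set a := Real.sqrt (Real.pi * lam * δ) with ha
  have hapos : 0 < a := Real.sqrt_pos.2 (by positivity)
  have ha2 : a ^ 2 = Real.pi * lam * δ := Real.sq_sqrt (by positivity)
  have hint : ∀ b c : ℝ, IntervalIntegrable (fun t => Real.exp (-t ^ 2)) MeasureTheory.volume b c :=
    fun b c => (Continuous.intervalIntegrable (by continuity) b c)
  have h1 : Erf (a * hU) - Erf (a * hL)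
      = 2 / Real.sqrt Real.pi * ∫ t in (a * hL)..(a * hU), Real.exp (-t ^ 2) := by
    rw [Erf, Erf, ← mul_sub, integral_interval_sub_left (hint 0 (a * hU)) (hint 0 (a * hL))]
  have h2 : (∫ t in (a * hL)..(a * hU), Real.exp (-t ^ 2))
      = a * ∫ s in hL..hU, Real.exp (-(Real.pi * lam * δ * s ^ 2)) := by
    rw [← smul_integral_comp_mul_left (fun t => Real.exp (-t ^ 2)) a, smul_eq_mul]
    congr 1
    apply intervalIntegral.integral_congr
    intro x _
    simp only [mul_pow, ha2]
  rw [h1, h2]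
  have hsqpi : Real.sqrt Real.pi ≠ 0 := ne_of_gt (Real.sqrt_pos.2 hπ)
  have haval : a = Real.sqrt Real.pi * Real.sqrt (lam * δ) := by
    rw [ha, mul_assoc, Real.sqrt_mul hπ.le]
  rw [haval]
  field_simp

/-- The RTNA coverage probability is strictly decreasing in the UAV density `λ` and
tends to `0` as `λ → ∞`. -/
theorem stmt10 (δ hL hU : ℝ) (hδ : 0 < δ) (hhL : 0 < hL) (hLU : hL < hU) :
    let CP : ℝ → ℝ := fun lam =>
      (Erf (Real.sqrt (Real.pi * lam * δ) * hU) - Erf (Real.sqrt (Real.pi * lam * δ) * hL))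
        / (2 * Real.sqrt (lam * δ) * (1 + δ) * (hU - hL))
    StrictAntiOn CP (Set.Ioi 0) ∧
    Filter.Tendsto CP Filter.atTop (nhds 0) := by
  intro CP
  have hπ := Real.pi_pos
  have hC : (0:ℝ) < (1 + δ) * (hU - hL) := by
    apply mul_pos (by linarith) (by linarith)
  have hintc : ∀ (c : ℝ) (b d : ℝ),
      IntervalIntegrable (fun s : ℝ => Real.exp (-(c * s ^ 2))) MeasureTheory.volume b d :=
    fun c b d => Continuous.intervalIntegrable (by continuity) b d
  have key : ∀ lam : ℝ, 0 < lam → CP lam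
      = (∫ s in hL..hU, Real.exp (-(Real.pi * lam * δ * s ^ 2))) / ((1 + δ) * (hU - hL)) := by
    intro lam hlam
    have hs : (0:ℝ) < Real.sqrt (lam * δ) := Real.sqrt_pos.2 (by positivity)
    show (Erf (Real.sqrt (Real.pi * lam * δ) * hU) - Erf (Real.sqrt (Real.pi * lam * δ) * hL))
        / (2 * Real.sqrt (lam * δ) * (1 + δ) * (hU - hL)) = _
    rw [erf_diff_key δ hL hU hδ lam hlam]
    rw [show 2 * Real.sqrt (lam * δ) * (1 + δ) * (hU - hL)
        = (2 * Real.sqrt (lam * δ)) * ((1 + δ) * (hU - hL)) by ring,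
      mul_div_mul_left _ _ (by positivity)]
  constructor
  · intro x hx y hy hxy
    simp only [Set.mem_Ioi] at hx hy
    rw [key x hx, key y hy]
    apply div_lt_div_of_pos_right ?_ hC <;> try exact hC
    · -- ∫ for y < ∫ for x
      have hpos : (0:ℝ) < ∫ s in hL..hU,
          (Real.exp (-(Real.pi * x * δ * s ^ 2)) - Real.exp (-(Real.pi * y * δ * s ^ 2))) := by
        apply intervalIntegral.intervalIntegral_pos_of_pos_on
        · exact (hintc _ hL hU).sub (hintc _ hL hU)
        · intro s hs
          have hs1 : hL < s := hs.1
          have hs2 : 0 < s := lt_trans hhL hs1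
          have : Real.pi * x * δ * s ^ 2 < Real.pi * y * δ * s ^ 2 := by
            have h0 : (0:ℝ) < Real.pi * δ * s ^ 2 := by positivity
            nlinarith [mul_pos (sub_pos.2 hxy) h0]
          have := Real.exp_lt_exp.2 (neg_lt_neg this)
          linarith
        · exact hLU
      rw [intervalIntegral.integral_sub (hintc _ hL hU) (hintc _ hL hU)] at hpos
      linarith
  · have hev : ∀ᶠ lam in Filter.atTop, CP lam
        = (∫ s in hL..hU, Real.exp (-(Real.pi * lam * δ * s ^ 2))) / ((1 + δ) * (hU - hL)) := by
      filter_upwards [Filter.eventually_gt_atTop 0] with lam hlam using key lam hlam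
    rw [Filter.tendsto_congr' hev]
    have hI : Filter.Tendsto (fun lam => ∫ s in hL..hU, Real.exp (-(Real.pi * lam * δ * s ^ 2)))
        Filter.atTop (nhds 0) := by
      apply squeeze_zero' (g := fun lam => (hU - hL) * Real.exp (-(Real.pi * lam * δ * hL ^ 2)))
      · filter_upwards with lam
        apply intervalIntegral.integral_nonneg hLU.le
        intro s _; positivity
      · filter_upwards [Filter.eventually_ge_atTop (0:ℝ)] with lam hlam
        have hmono : (∫ s in hL..hU, Real.exp (-(Real.pi * lam * δ * s ^ 2)))
            ≤ ∫ _s in hL..hU, Real.exp (-(Real.pi * lam * δ * hL ^ 2)) := by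
          apply intervalIntegral.integral_mono_on hLU.le (hintc _ hL hU)
            (Continuous.intervalIntegrable (by continuity) hL hU)
          intro s hs
          apply Real.exp_le_exp.2
          apply neg_le_neg
          have h1 : hL ^ 2 ≤ s ^ 2 := by nlinarith [hs.1]
          have : 0 ≤ Real.pi * lam * δ := by positivity
          nlinarith
        rw [intervalIntegral.integral_const, smul_eq_mul] at hmono
        exact hmono
      · have hexp : Filter.Tendsto (fun lam : ℝ => Real.exp (-(Real.pi * lam * δ * hL ^ 2)))
            Filter.atTop (nhds 0) := by
          have hc : (0:ℝ) < Real.pi * δ * hL ^ 2 := by positivity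
          have h2 : Filter.Tendsto (fun lam : ℝ => lam * (Real.pi * δ * hL ^ 2))
              Filter.atTop Filter.atTop := Filter.Tendsto.atTop_mul_const hc Filter.tendsto_id
          have h3 := Filter.tendsto_neg_atTop_atBot.comp h2
          have h1 : Filter.Tendsto (fun lam : ℝ => -(Real.pi * lam * δ * hL ^ 2))
              Filter.atTop Filter.atBot :=
            h3.congr (fun lam => by simp only [Function.comp]; ring)
          exact Real.tendsto_exp_atBot.comp h1
        have := hexp.const_mul (hU - hL)
        simpa using this
    have := hI.div_const ((1 + δ) * (hU - hL))
    simpa using this
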